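/- Let W be a uniformly recurrent non-eventually-periodic infinite word whose recurrence function satisfies P₂(k) ≤ C·k. Then there exists C₅ > 0 such that for any factor u of W, any two distinct occurrences of u in W have left endpoints at distance at least C₅·|u|. -/

import Mathlib

/-- The factor (subword) of the infinite word `W` of length `n` starting at position `i`. -/
def factorAt {A : Type*} (W : ℕ → A) (i n : ℕ) : List A :=
  (List.range n).map (fun j => W (i + j))

/-- `u` is a finite factor of the infinite word `W`. -/
def IsFactorOf {A : Type*} (u : List A) (W : ℕ → A) : Prop :=
  ∃ i, u = factorAt W i u.length

lemma factorAt_length {A : Type*} (W : ℕ → A) (i n : ℕ) : (factorAt W i n).length = n := by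
  simp [factorAt]

lemma factorAt_getElem {A : Type*} (W : ℕ → A) (i n p : ℕ)
    (h : p < (factorAt W i n).length) : (factorAt W i n)[p] = W (i + p) := by
  simp [factorAt]

/-- In a uniformly recurrent, non-eventually-periodic word with linear recurrence,
two distinct occurrences of a factor u are at distance at least C₅·|u|. -/
theorem stmt6 {A : Type*} (W : ℕ → A) (C : ℕ)
    (hrec : ∀ k ≥ 1, ∀ u v : List A, IsFactorOf u W → u.length = C * k →
      IsFactorOf v W → v.length = k → v <:+: u)
    (hnp : ¬ ∃ N k : ℕ, 0 < k ∧ ∀ i ≥ N, W (i + k) = W i) :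
    ∃ C₅ : ℝ, 0 < C₅ ∧ ∀ (u : List A) (i j : ℕ),
      factorAt W i u.length = u → factorAt W j u.length = u → i ≠ j →
      C₅ * u.length ≤ |(i : ℝ) - (j : ℝ)| := by
  have hMnat : 0 < max C 1 := lt_of_lt_of_le one_pos (le_max_right C 1)
  have hMpos : (0:ℝ) < 2 * ((max C 1 : ℕ) : ℝ) := by
    have : (0:ℝ) < ((max C 1 : ℕ) : ℝ) := by exact_mod_cast hMnat
    linarith
  refine ⟨1 / (2 * ((max C 1 : ℕ) : ℝ)), by positivity, ?_⟩
  intro u i j hi hj hij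
  set n := u.length with hn
  have key : ∀ a b : ℕ, a < b → factorAt W a n = u → factorAt W b n = u →
      n ≤ 2 * (max C 1) * (b - a) := by
    intro a b hab ha hb
    set d := b - a with hd
    have hd1 : 1 ≤ d := by omega
    have hper0 : ∀ t, t < n → W (a + t + d) = W (a + t) := by
      intro t ht
      have h1 : (factorAt W a n)[t]'(by rw [factorAt_length]; exact ht) =
          (factorAt W b n)[t]'(by rw [factorAt_length]; exact ht) := by
        simp_rw [ha, hb]
      rw [factorAt_getElem, factorAt_getElem] at h1
      have he : a + t + d = b + t := by omega
      rw [he]; exact h1.symm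
    have hlt : n < C * (d + 1) := by
      by_contra hle
      push_neg at hle
      apply hnp
      refine ⟨0, d, by omega, ?_⟩
      intro x _
      set k := d + 1 with hk
      have hu' : IsFactorOf (factorAt W a (C * k)) W := ⟨a, by rw [factorAt_length]⟩
      have hv : IsFactorOf (factorAt W x k) W := ⟨x, by rw [factorAt_length]⟩
      obtain ⟨s, t, hst⟩ := hrec k (by omega) _ _ hu' (factorAt_length W a (C*k))
        hv (factorAt_length W x k)
      have hlen : s.length + (k + t.length) = C * k := by
        have := congrArg List.length hst
        simpa [factorAt_length] using this
      have hval : ∀ m, m < k → W (x + m) = W (a + (m + s.length)) := by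
        intro m hm
        have hm' : m < (factorAt W x k).length := by rw [factorAt_length]; exact hm
        have hv1 : (factorAt W x k)[m]'hm' =
            (s ++ factorAt W x k)[m + s.length]'(by
              simpa [Nat.add_comm] using Nat.add_lt_add_left hm' s.length) :=
          List.getElem_append_right' s hm'
        have hlt2 : m + s.length < (s ++ factorAt W x k).length := by
          simpa [Nat.add_comm] using Nat.add_lt_add_left hm' s.length
        have hv2 : (s ++ factorAt W x k)[m + s.length]'hlt2 =
            ((s ++ factorAt W x k) ++ t)[m + s.length]'(by
              simp only [List.length_append, factorAt_length] at hlt2 ⊢; omega) :=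
          List.getElem_append_left' hlt2 t
        have hv3 := List.getElem_of_eq hst (i := m + s.length) (by
          simp only [List.length_append, factorAt_length] at hlt2 ⊢; omega)
        rw [factorAt_getElem] at hv1
        rw [hv3, factorAt_getElem] at hv2
        exact hv1.trans hv2
      have hs_lt : s.length < n := by omega
      have e1 : W (x + d) = W (a + (d + s.length)) := hval d (by omega)
      have e2 : W (x) = W (a + s.length) := by
        have := hval 0 (by omega); simpa using this
      have e3 : W (a + s.length + d) = W (a + s.length) := hper0 s.length hs_lt
      have e4 : a + (d + s.length) = a + s.length + d := by omega
      rw [e1, e4, e3, e2]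
    have hstep : C * (d + 1) ≤ max C 1 * (2 * d) :=
      Nat.mul_le_mul (le_max_left C 1) (by omega)
    have : max C 1 * (2 * d) = 2 * max C 1 * d := by ring
    omega
  rcases lt_trichotomy i j with h | h | h
  · have hk := key i j h hi hj
    have habs : |(i : ℝ) - (j : ℝ)| = ((j - i : ℕ) : ℝ) := by
      rw [Nat.cast_sub h.le, abs_sub_comm, abs_of_nonneg]
      have : (i:ℝ) ≤ j := by exact_mod_cast h.le
      linarith
    rw [habs, div_mul_eq_mul_div, div_le_iff₀ hMpos]
    have : (n : ℝ) ≤ 2 * ((max C 1 : ℕ) : ℝ) * ((j - i : ℕ) : ℝ) := by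
      exact_mod_cast hk
    linarith
  · exact absurd h hij
  · have hk := key j i h hj hi
    have habs : |(i : ℝ) - (j : ℝ)| = ((i - j : ℕ) : ℝ) := by
      rw [Nat.cast_sub h.le, abs_of_nonneg]
      have : (j:ℝ) ≤ i := by exact_mod_cast h.le
      linarith
    rw [habs, div_mul_eq_mul_div, div_le_iff₀ hMpos]
    have : (n : ℝ) ≤ 2 * ((max C 1 : ℕ) : ℝ) * ((i - j : ℕ) : ℝ) := by
      exact_mod_cast hk
    linarith
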